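/- Let V be a finite set and let zwt_V : 𝔽₂^V-indexed Pauli strings → ℕ count the number of positions at which a Pauli string equals Z. Let 𝒮 be the stabiliser group of a graph state on a graph G = (V,E), generated by S_v = X(v)∏_{w∈N(v)} Z(w). Then for the canonical generators, zwt_V(S_v) ≡ deg(v) (mod 2), and for any element S = ∏_{v∈W} S_v, zwt_V(S) ≡ Σ_{v∈W} deg(v) (mod 2). In particular zwt_V is additive mod 2 on products of canonical generators: zwt_V(S S') ≡ zwt_V(S) + zwt_V(S') (mod 2) for all S, S' ∈ 𝒮. -/

import Mathlib

/-- The stabiliser `∏_{v ∈ W} S_v` of the graph state of `G`, as a Pauli string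
(phases ignored): it has a `Z` at `u` iff `u ∉ W` and `|N(u) ∩ W|` is odd. -/
def zwtStab {V : Type} [Fintype V] [DecidableEq V]
    (G : SimpleGraph V) [DecidableRel G.Adj] (W : Finset V) : ℕ :=
  (Finset.univ.filter (fun u => u ∉ W ∧ Odd ((W.filter (G.Adj u)).card))).card

lemma natCast_zmod2 (n : ℕ) : (n : ZMod 2) = if Odd n then 1 else 0 := by
  rcases Nat.even_or_odd n with h | h
  · rw [if_neg (Nat.not_odd_iff_even.mpr h), ← ZMod.natCast_mod,
      Nat.even_iff.mp h]; simp
  · rw [if_pos h, ← ZMod.natCast_mod, Nat.odd_iff.mp h]; simp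

lemma key {V : Type} [Fintype V] [DecidableEq V]
    (G : SimpleGraph V) [DecidableRel G.Adj] (W : Finset V) :
    (zwtStab G W : ZMod 2) = ∑ v ∈ W, (G.degree v : ZMod 2) := by
  classical
  set c : V → ℕ := fun u => ((W.filter (G.Adj u)).card) with hc
  have hcast : ∀ u : V, (c u : ZMod 2) = ∑ w ∈ W, (if G.Adj u w then (1 : ZMod 2) else 0) := by
    intro u
    rw [hc]
    simp only [Finset.card_filter, Nat.cast_sum, Nat.cast_ite, Nat.cast_one, Nat.cast_zero]
  have h1 : (zwtStab G W : ZMod 2)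
      = ∑ u : V, (if u ∉ W ∧ Odd (c u) then (1 : ZMod 2) else 0) := by
    rw [zwtStab, Finset.card_filter]
    push_cast
    simp
    rfl
  have h2 : ∀ u : V, (if u ∉ W ∧ Odd (c u) then (1 : ZMod 2) else 0)
      = (c u : ZMod 2) - (if u ∈ W then (c u : ZMod 2) else 0) := by
    intro u
    rw [natCast_zmod2 (c u)]
    by_cases hu : u ∈ W <;> by_cases ho : Odd (c u) <;> simp [hu, ho]
  rw [h1]
  simp_rw [h2, Finset.sum_sub_distrib]
  have h3 : ∑ u : V, (c u : ZMod 2) = ∑ v ∈ W, (G.degree v : ZMod 2) := by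
    simp_rw [hcast]
    rw [Finset.sum_comm]
    refine Finset.sum_congr rfl fun w hw => ?_
    rw [SimpleGraph.degree, SimpleGraph.neighborFinset_eq_filter, Finset.card_filter]
    simp only [Nat.cast_sum, Nat.cast_ite, Nat.cast_one, Nat.cast_zero]
    refine Finset.sum_congr rfl fun u _ => ?_
    by_cases h : G.Adj u w
    · rw [if_pos h, if_pos ((G.adj_comm u w).mp h)]
    · rw [if_neg h, if_neg (fun hh => h ((G.adj_comm u w).mpr hh))]
  have h4 : ∑ u : V, (if u ∈ W then (c u : ZMod 2) else 0) = 0 := by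
    rw [Finset.sum_ite_mem, Finset.univ_inter]
    rw [Finset.sum_congr rfl (fun u _ => hcast u), ← Finset.sum_product']
    refine Finset.sum_involution (fun a _ => a.swap) ?_ ?_ ?_ ?_
    · intro a _
      simp only [Prod.fst_swap, Prod.snd_swap]
      by_cases h : G.Adj a.1 a.2
      · rw [if_pos h, if_pos ((G.adj_comm a.1 a.2).mp h)]
        decide
      · rw [if_neg h, if_neg (fun hh => h ((G.adj_comm a.1 a.2).mpr hh)), add_zero]
    · intro a ha hne
      have hadj : G.Adj a.1 a.2 := by
        by_contra h; simp [h] at hne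
      intro hs
      exact G.ne_of_adj hadj (by rw [← congrArg Prod.fst hs]; rfl)
    · intro a ha
      rw [Finset.mem_product] at ha ⊢
      exact ⟨ha.2, ha.1⟩
    · intro a _
      exact Prod.swap_swap a
  rw [h3, h4, sub_zero]

/-- For canonical generators, `zwt_V(S_v) ≡ deg(v) (mod 2)`; for a general element
`S = ∏_{v∈W} S_v`, `zwt_V(S) ≡ Σ_{v∈W} deg(v) (mod 2)`; and `zwt_V` is additive mod 2
on the stabiliser group: `zwt_V(S S') ≡ zwt_V(S) + zwt_V(S') (mod 2)` (where the product
`S S'` corresponds to the symmetric difference of index sets). -/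
theorem stmt_7 (V : Type) [Fintype V] [DecidableEq V]
    (G : SimpleGraph V) [DecidableRel G.Adj] :
    (∀ v : V, (zwtStab G {v} : ZMod 2) = (G.degree v : ZMod 2)) ∧
    (∀ W : Finset V, (zwtStab G W : ZMod 2) = ∑ v ∈ W, (G.degree v : ZMod 2)) ∧
    (∀ W W' : Finset V,
      (zwtStab G (symmDiff W W') : ZMod 2) = (zwtStab G W : ZMod 2) + (zwtStab G W' : ZMod 2)) := by
  refine ⟨fun v => by simp [key], fun W => key G W, fun W W' => ?_⟩
  simp only [key]
  rw [symmDiff_def, Finset.sup_eq_union, Finset.sum_union disjoint_sdiff_sdiff,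
    ← Finset.sdiff_inter_self_left W W', ← Finset.sdiff_inter_self_left W' W,
    Finset.sum_sdiff_eq_sub Finset.inter_subset_left,
    Finset.sum_sdiff_eq_sub Finset.inter_subset_left,
    Finset.inter_comm W' W, sub_add_sub_comm, CharTwo.add_self_eq_zero, sub_zero]
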